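/- Let f : ℝ → ℂ be continuous with |f(m)| ≤ C e^{−β|m|} and set φ(m) = i m f(m). Then for all z in the strip H_β = {z : |Im z| < β}, the derivative of the inverse Fourier transform satisfies ∂_z F⁻¹(f)(z) = F⁻¹(φ)(z). -/

import Mathlib

open MeasureTheory Filter Set Topology

private lemma even_integrable_aux {g : ℝ → ℝ} (hg : Continuous g)
    (hsymm : ∀ x, g (-x) = g x) (h : IntegrableOn g (Ioi 0)) : Integrable g := by
  rw [← integrableOn_univ, ← Iio_union_Ici (a := (0:ℝ)), integrableOn_union]
  refine ⟨?_, (integrableOn_Ici_iff_integrableOn_Ioi).mpr h⟩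
  have A : MeasurableEmbedding (fun x : ℝ => -x) :=
    (Homeomorph.neg ℝ).isClosedEmbedding.measurableEmbedding
  have hmap : volume.restrict (Iio (0:ℝ)) =
      Measure.map (fun x : ℝ => -x) (volume.restrict (Ioi 0)) := by
    rw [show volume.restrict (Iio (0:ℝ))
        = (Measure.map (fun x : ℝ => -x) volume).restrict (Iio 0) by
      rw [Measure.map_neg_eq_self], A.restrict_map]
    congr 1
    ext x
    simp [neg_lt_zero]
  rw [IntegrableOn, hmap, A.integrable_map_iff]
  exact h.congr_fun (fun x _ => (hsymm x).symm) measurableSet_Ioi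

private lemma exp_decay_integrable_aux {b : ℝ} (hb : 0 < b) :
    Integrable (fun x : ℝ => Real.exp (-b * |x|)) := by
  refine even_integrable_aux (by continuity) (fun x => by rw [abs_neg]) ?_
  exact (exp_neg_integrableOn_Ioi 0 hb).congr_fun
    (fun x hx => by rw [abs_of_pos hx]) measurableSet_Ioi

private lemma abs_mul_exp_decay_integrable_aux {b : ℝ} (hb : 0 < b) :
    Integrable (fun x : ℝ => |x| * Real.exp (-b * |x|)) := by
  refine even_integrable_aux (by continuity) (fun x => by rw [abs_neg]) ?_
  have hcont : ContinuousOn (fun x : ℝ => x * Real.exp (-b * x)) (Ici 0) := by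
    fun_prop
  have hto : Tendsto (fun x : ℝ => x * Real.exp (-(b/2) * x)) atTop (𝓝 0) := by
    have h1 := Real.tendsto_pow_mul_exp_neg_atTop_nhds_zero 1
    have h2 : Tendsto (fun x : ℝ => (b/2) * x) atTop atTop :=
      tendsto_id.const_mul_atTop (half_pos hb)
    have h3 := (h1.comp h2).const_mul (2/b)
    simp only [mul_zero] at h3
    refine h3.congr fun x => ?_
    have hb' : b ≠ 0 := hb.ne'
    simp only [Function.comp_apply, pow_one]
    field_simp
  have hbig : (fun x : ℝ => x * Real.exp (-b * x)) =O[atTop]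
      fun x => Real.exp (-(b/2) * x) := by
    have h1 : (fun x : ℝ => x * Real.exp (-(b/2) * x)) =O[atTop] (fun _ => (1:ℝ)) :=
      hto.isBigO_one ℝ
    have h2 := h1.mul (Asymptotics.isBigO_refl (fun x : ℝ => Real.exp (-(b/2) * x)) atTop)
    refine (Asymptotics.IsBigO.congr' h2 ?_ ?_)
    · filter_upwards with x
      rw [mul_assoc, ← Real.exp_add]
      ring_nf
    · filter_upwards with x
      rw [one_mul]
  have := integrable_of_isBigO_exp_neg (half_pos hb) hcont hbig
  exact this.congr_fun (fun x hx => by rw [abs_of_pos hx]) measurableSet_Ioi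

/-- Differentiation of the inverse Fourier transform on the strip:
`∂_z F⁻¹(f)(z) = F⁻¹(m ↦ i m f(m))(z)` for `|Im z| < β`. -/
theorem stmt_6 (f : ℝ → ℂ) (hf : Continuous f) (C β : ℝ) (hC : 0 < C) (hβ : 0 < β)
    (hbd : ∀ x : ℝ, ‖f x‖ ≤ C * Real.exp (-β * |x|))
    (z : ℂ) (hz : |z.im| < β) :
    HasDerivAt
      (fun w : ℂ => (Real.sqrt (2 * Real.pi) : ℂ)⁻¹ *
        ∫ m : ℝ, f m * Complex.exp (Complex.I * w * m))
      ((Real.sqrt (2 * Real.pi) : ℂ)⁻¹ *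
        ∫ m : ℝ, (Complex.I * m * f m) * Complex.exp (Complex.I * z * m)) z := by
  set ε := (β - |z.im|) / 2 with hε_def
  have hε : 0 < ε := by rw [hε_def]; linarith
  -- basic norm computation
  have hnorm : ∀ (w : ℂ) (m : ℝ), ‖Complex.exp (Complex.I * w * m)‖
      = Real.exp (-w.im * m) := by
    intro w m
    rw [Complex.norm_exp]
    congr 1
    simp [Complex.mul_re, Complex.mul_im]
  have hexp_le : ∀ (w : ℂ) (m : ℝ), |w.im| ≤ β - ε →
      ‖f m * Complex.exp (Complex.I * w * m)‖ ≤ C * Real.exp (-ε * |m|) := by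
    intro w m hw
    rw [norm_mul, hnorm]
    calc ‖f m‖ * Real.exp (-w.im * m)
        ≤ (C * Real.exp (-β * |m|)) * Real.exp ((β - ε) * |m|) := by
          apply mul_le_mul (hbd m) _ (Real.exp_pos _).le
            (by positivity)
          apply Real.exp_le_exp.mpr
          calc -w.im * m ≤ |(-w.im) * m| := le_abs_self _
            _ = |w.im| * |m| := by rw [abs_mul, abs_neg]
            _ ≤ (β - ε) * |m| := by
                apply mul_le_mul_of_nonneg_right hw (abs_nonneg m)
      _ = C * Real.exp (-ε * |m|) := by
          rw [mul_assoc, ← Real.exp_add]; ring_nf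
  -- the parametric integral lemma
  have key := hasDerivAt_integral_of_dominated_loc_of_deriv_le (μ := volume)
    (F := fun (w : ℂ) (m : ℝ) => f m * Complex.exp (Complex.I * w * m))
    (F' := fun (w : ℂ) (m : ℝ) => (Complex.I * m * f m) * Complex.exp (Complex.I * w * m))
    (x₀ := z) (bound := fun m => C * (|m| * Real.exp (-ε * |m|))) (Metric.ball_mem_nhds z hε)
    ?_ ?_ ?_ ?_ ?_ ?_
  · exact (key.2).const_mul _
  · -- measurability of F w
    filter_upwards with w
    exact (hf.mul (by continuity)).aestronglyMeasurable
  · -- integrability of F z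
    refine (((exp_decay_integrable_aux hε).const_mul C).mono'
      (hf.mul (by continuity)).aestronglyMeasurable ?_)
    filter_upwards with m
    exact hexp_le z m (by simp only [hε_def]; linarith)
  · -- measurability of F' z
    exact (Continuous.mul (by continuity) (by continuity)).aestronglyMeasurable
  · -- bound
    filter_upwards with m w hw
    have him : |w.im| ≤ β - ε := by
      have h1 : |w.im - z.im| ≤ ‖w - z‖ := by
        simpa [Complex.sub_im] using Complex.abs_im_le_norm (w - z)
      have h2 : ‖w - z‖ < ε := by simpa [Metric.mem_ball, dist_eq_norm] using hw
      have := abs_sub_abs_le_abs_sub w.im z.im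
      have : |w.im| ≤ |z.im| + ε := by
        nlinarith [abs_sub_abs_le_abs_sub w.im z.im]
      simp only [hε_def] at this ⊢
      linarith
    have h3 : ‖(Complex.I * m * f m) * Complex.exp (Complex.I * w * m)‖
        = |m| * ‖f m * Complex.exp (Complex.I * w * m)‖ := by
      simp only [norm_mul, Complex.norm_I, Complex.norm_real, Real.norm_eq_abs]
      ring
    rw [h3]
    calc |m| * ‖f m * Complex.exp (Complex.I * w * m)‖
        ≤ |m| * (C * Real.exp (-ε * |m|)) :=
          mul_le_mul_of_nonneg_left (hexp_le w m him) (abs_nonneg m)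
      _ = C * (|m| * Real.exp (-ε * |m|)) := by ring
  · -- integrable bound
    exact (abs_mul_exp_decay_integrable_aux hε).const_mul C
  · -- differentiability
    filter_upwards with m w _
    have h1 : HasDerivAt (fun w : ℂ => Complex.I * w * m) (Complex.I * m) w := by
      simpa using ((hasDerivAt_id w).const_mul Complex.I).mul_const (m : ℂ)
    have h2 := (h1.cexp).const_mul (f m)
    exact h2.congr_deriv (by ring)
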